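/- Let M = (S, ρ) be a matroid scheme with no loops and let F = F(M) be its poset of flats, with rank function ρ restricted to F. Then the characteristic polynomial of F satisfies χ_F(t) = (−1)^{ρ(M)} · T_M(1 − t, 0), where T_M is the Tutte polynomial of M. -/

import Mathlib

/-- The set of minimal upper bounds of `x` and `y` (denoted `x ∨ y` in the paper). -/
def mub {S : Type*} [PartialOrder S] (x y : S) : Set S :=
  {u | x ≤ u ∧ y ≤ u ∧ ∀ v, x ≤ v → y ≤ v → v ≤ u → v = u}

/-- The set of maximal lower bounds of `x` and `y` (denoted `x ∧ y` in the paper). -/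
def mlb {S : Type*} [PartialOrder S] (x y : S) : Set S :=
  {l | l ≤ x ∧ l ≤ y ∧ ∀ m, m ≤ x → m ≤ y → l ≤ m → m = l}

/-- The set of minimal upper bounds of a subset `T`. -/
def mubSet {S : Type*} [PartialOrder S] (T : Set S) : Set S :=
  {u | (∀ t ∈ T, t ≤ u) ∧ ∀ v, (∀ t ∈ T, t ≤ v) → v ≤ u → v = u}

/-- The number of atoms below `x`, i.e. `|x|`, the rank of `x` in a simplicial poset. -/
noncomputable def natRank {S : Type*} [PartialOrder S] [OrderBot S] (x : S) : ℕ :=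
  Nat.card {a : S // IsAtom a ∧ a ≤ x}

/-- A finite bounded-below poset is simplicial if every lower interval is isomorphic to
the Boolean lattice of subsets of the set of atoms below. -/
def IsSimplicialPoset (S : Type*) [PartialOrder S] [OrderBot S] [Fintype S] : Prop :=
  ∀ x : S, Nonempty (Set.Iic x ≃o Set {a : S // IsAtom a ∧ a ≤ x})

/-- A matroid scheme: a rank function `ρ` on a finite simplicial poset `S`
satisfying (M1)–(M5). -/
structure IsMatroidScheme {S : Type*} [PartialOrder S] [OrderBot S] [Fintype S]
    (ρ : S → ℕ) : Prop where
  simplicial : IsSimplicialPoset S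
  M1 : ∀ x : S, ρ x ≤ natRank x
  M2 : ∀ ⦃x y : S⦄, x ≤ y → ρ x ≤ ρ y
  M3 : ∀ x y u l : S, u ∈ mub x y → l ∈ mlb x y → ρ u + ρ l ≤ ρ x + ρ y
  M4 : ∀ x y l : S, l ∈ mlb x y → ρ x = ρ l → (mub x y).Nonempty
  M5 : ∀ x y : S, ρ x < ρ y →
    ∃ a : S, IsAtom a ∧ a ≤ y ∧ ¬ a ≤ x ∧ (mub x a).Nonempty

/-- `cl` is the closure operator of a matroid scheme `(S, ρ)`:
`cl x` is the greatest element above `x` of the same rank. -/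
def IsClosureFun {S : Type*} [PartialOrder S] (ρ : S → ℕ) (cl : S → S) : Prop :=
  ∀ x : S, x ≤ cl x ∧ ρ (cl x) = ρ x ∧ ∀ y : S, x ≤ y → ρ y = ρ x → y ≤ cl x

/-- The bases of a matroid scheme: the maximal independent elements. -/
def Bases {S : Type*} [PartialOrder S] [OrderBot S] (ρ : S → ℕ) : Set S :=
  {x | ρ x = natRank x ∧ ∀ w, ρ w = natRank w → x ≤ w → w = x}

/-- The circuits of a matroid scheme: the minimal dependent elements. -/
def Circuits {S : Type*} [PartialOrder S] [OrderBot S] (ρ : S → ℕ) : Set S :=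
  {x | ρ x < natRank x ∧ ∀ y, ρ y < natRank y → y ≤ x → y = x}

/-- `c` is the complement `x ∖ a` of `a` in the Boolean lattice `S_{≤ x}`. -/
def IsComplementIn {S : Type*} [PartialOrder S] [OrderBot S] (c a x : S) : Prop :=
  c ≤ x ∧ a ≤ x ∧ (∀ l : S, l ≤ c → l ≤ a → l = ⊥) ∧
    (∀ u : S, u ≤ x → c ≤ u → a ≤ u → u = x)

/-- The rank of a matroid scheme: the common value of `ρ` on maximal elements
(equal to the maximum value of `ρ`). -/
noncomputable def schemeRank {S : Type*} [Fintype S] (ρ : S → ℕ) : ℕ :=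
  sSup (Set.range ρ)

/-- The Tutte polynomial of a matroid scheme, as a two-variable integer function. -/
noncomputable def tutte {S : Type*} [PartialOrder S] [OrderBot S] [Fintype S]
    (ρ : S → ℕ) (x y : ℤ) : ℤ :=
  ∑ w : S, (x - 1) ^ (schemeRank ρ - ρ w) * (y - 1) ^ (natRank w - ρ w)

/-- An element of a poset is an order-atom if it covers a global minimum. -/
def OrdAtom {P : Type*} [PartialOrder P] (a : P) : Prop :=
  ∃ b : P, (∀ z : P, b ≤ z) ∧ b ⋖ a

/-- A partial order is a geometric lattice: it is bounded below, every pair has a least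
upper bound and greatest lower bound, it is atomistic, and it is (upper) semimodular. -/
def IsGeomLatOrder (P : Type*) [PartialOrder P] : Prop :=
  (∃ b : P, ∀ x : P, b ≤ x) ∧
  (∀ x y : P, ∃ u : P, IsLUB {x, y} u) ∧
  (∀ x y : P, ∃ l : P, IsGLB {x, y} l) ∧
  (∀ x : P, IsLUB {a : P | OrdAtom a ∧ a ≤ x} x) ∧
  (∀ x y m j : P, IsGLB {x, y} m → IsLUB {x, y} j → m ⋖ x → y ⋖ j)

/-- A geometric poset: a finite bounded-below poset with rank function `rk`
satisfying (G1) and (G2). -/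
def IsGeometricPoset (P : Type*) [PartialOrder P] [OrderBot P] [Fintype P]
    (rk : P → ℕ) : Prop :=
  rk ⊥ = 0 ∧
  (∀ ⦃x y : P⦄, x ≤ y → rk x ≤ rk y) ∧
  (∀ x y : P, x ⋖ y → rk y = rk x + 1) ∧
  (∀ m : P, IsMax m → IsGeomLatOrder (Set.Iic m)) ∧
  (∀ (x : P) (A : Set P), (∀ a ∈ A, IsAtom a) →
    ∀ y ∈ mubSet A, rk x < rk y → rk y = Nat.card A →
      ∃ a ∈ A, ¬ a ≤ x ∧ ∃ w : P, x ≤ w ∧ a ≤ w)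


section AuxST19

variable {S : Type*} [PartialOrder S] [OrderBot S] [Fintype S]

omit [Fintype S] in
lemma st19_natRank_bot : natRank (⊥ : S) = 0 := by
  haveI : IsEmpty {a : S // IsAtom a ∧ a ≤ (⊥ : S)} :=
    ⟨fun a => a.2.1.1 (le_bot_iff.mp a.2.2)⟩
  exact Nat.card_of_isEmpty

lemma st19_rho_bot {ρ : S → ℕ} (h : IsMatroidScheme ρ) : ρ ⊥ = 0 := by
  have := h.M1 (⊥ : S)
  rw [st19_natRank_bot] at this
  exact Nat.le_zero.mp this

lemma st19_cl_bot {ρ : S → ℕ} (h : IsMatroidScheme ρ) {cl : S → S}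
    (hcl : IsClosureFun ρ cl) (hnoloop : ∀ a : S, IsAtom a → ρ a ≠ 0) :
    cl (⊥ : S) = ⊥ := by
  by_contra hne
  obtain ⟨a, ha, hax⟩ : ∃ a, IsAtom a ∧ a ≤ cl ⊥ := by
    rcases IsAtomic.eq_bot_or_exists_atom_le (cl ⊥) with h' | h'
    · exact absurd h' hne
    · exact h'
  have : ρ a ≤ ρ (cl ⊥) := h.M2 hax
  rw [(hcl ⊥).2.1, st19_rho_bot h] at this
  exact hnoloop a ha (Nat.le_zero.mp this)

omit [OrderBot S] [Fintype S] in
lemma st19_cl_idem {ρ : S → ℕ} {cl : S → S} (hcl : IsClosureFun ρ cl) (x : S) :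
    cl (cl x) = cl x :=
  le_antisymm
    ((hcl x).2.2 (cl (cl x)) (le_trans (hcl x).1 (hcl (cl x)).1)
      (by rw [(hcl (cl x)).2.1, (hcl x).2.1]))
    (hcl (cl x)).1

lemma st19_cl_le_flat {ρ : S → ℕ} (h : IsMatroidScheme ρ) {cl : S → S}
    (hcl : IsClosureFun ρ cl) {w F : S} (hF : cl F = F) (hwF : w ≤ F) :
    cl w ≤ F := by
  obtain ⟨l, hwl, hl⟩ := Finite.exists_le_maximal
    (p := fun m => m ≤ cl w ∧ m ≤ F) (a := w) ⟨(hcl w).1, hwF⟩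
  have hlm : l ∈ mlb (cl w) F :=
    ⟨hl.1.1, hl.1.2, fun m h1 h2 h3 => le_antisymm (hl.2 ⟨h1, h2⟩ h3) h3⟩
  have hρl : ρ (cl w) = ρ l :=
    le_antisymm (by rw [(hcl w).2.1]; exact h.M2 hwl) (h.M2 hl.1.1)
  obtain ⟨u, hu⟩ := h.M4 (cl w) F l hlm hρl
  have h3 := h.M3 (cl w) F u l hu hlm
  have hFu : F ≤ u := hu.2.1
  have hρu : ρ u = ρ F := le_antisymm (by omega) (h.M2 hFu)
  have : u ≤ cl F := (hcl F).2.2 u hFu (by rw [hρu])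
  exact le_trans hu.1 (hF ▸ this)

lemma st19_bool_sum (hs : IsSimplicialPoset S) (x : S)
    [DecidablePred fun w : S => w ≤ x] [Decidable (x = ⊥)] :
    (∑ w : S, if w ≤ x then ((-1 : ℤ) ^ natRank w) else 0)
      = if x = ⊥ then 1 else 0 := by
  classical
  obtain ⟨e⟩ := hs x
  set A := {a : S // IsAtom a ∧ a ≤ x} with hA
  have atomIic : ∀ b : Set.Iic x, IsAtom b ↔ IsAtom (b : S) := by
    intro b
    constructor
    · intro hb
      refine ⟨fun hc => hb.1 (Subtype.ext hc), fun c hc => ?_⟩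
      have hcx : c ≤ x := le_trans hc.le b.2
      exact congrArg Subtype.val (hb.2 (⟨c, hcx⟩ : Set.Iic x) (Subtype.mk_lt_mk.mpr hc))
    · intro hb
      refine ⟨fun hc => hb.1 (congrArg Subtype.val hc), fun c hc => ?_⟩
      exact Subtype.ext (hb.2 c.1 (Subtype.coe_lt_coe.mpr hc))
  have key : ∀ w : Set.Iic x, natRank (w : S) = Nat.card (e w) := by
    intro w
    have e1 : {a : S // IsAtom a ∧ a ≤ (w : S)} ≃ {b : Set.Iic x // IsAtom b ∧ b ≤ w} :=
      { toFun := fun a => ⟨⟨a.1, a.2.2.trans w.2⟩,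
          (atomIic _).mpr a.2.1, Subtype.mk_le_mk.mpr a.2.2⟩
        invFun := fun b => ⟨b.1.1, (atomIic _).mp b.2.1, Subtype.coe_le_coe.mpr b.2.2⟩
        left_inv := fun a => rfl
        right_inv := fun b => rfl }
    have e2 : {b : Set.Iic x // IsAtom b ∧ b ≤ w} ≃ {T : Set A // IsAtom T ∧ T ≤ e w} :=
      e.toEquiv.subtypeEquiv (fun b => by
        constructor
        · rintro ⟨h1, h2⟩; exact ⟨(e.isAtom_iff b).mpr h1, e.le_iff_le.mpr h2⟩
        · rintro ⟨h1, h2⟩; exact ⟨(e.isAtom_iff b).mp h1, e.le_iff_le.mp h2⟩)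
    have e3 : {T : Set A // IsAtom T ∧ T ≤ e w} ≃ (e w : Set A) := by
      refine (Equiv.ofBijective
        (fun α : (e w : Set A) => (⟨{α.1}, Set.isAtom_singleton _,
          Set.singleton_subset_iff.mpr α.2⟩ : {T : Set A // IsAtom T ∧ T ≤ e w})) ?_).symm
      constructor
      · intro α β hαβ
        have : ({α.1} : Set A) = {β.1} := congrArg Subtype.val hαβ
        exact Subtype.ext (Set.singleton_eq_singleton_iff.mp this)
      · rintro ⟨T, hT, hTw⟩
        obtain ⟨α, rfl⟩ := Set.isAtom_iff.mp hT
        exact ⟨⟨α, Set.singleton_subset_iff.mp hTw⟩, rfl⟩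
    exact Nat.card_congr ((e1.trans e2).trans e3)
  have h1 : (∑ w : S, if w ≤ x then ((-1 : ℤ) ^ natRank w) else 0)
      = ∑ w : Set.Iic x, (-1 : ℤ) ^ natRank (w : S) := by
    rw [← Finset.sum_filter]
    exact Finset.sum_subtype _ (fun w => by simp [Set.mem_Iic]) _
  have h2 : (∑ w : Set.Iic x, (-1 : ℤ) ^ natRank (w : S))
      = ∑ T : Set A, (-1 : ℤ) ^ Nat.card T := by
    rw [Finset.sum_congr rfl (fun w _ => by rw [key w])]
    exact Equiv.sum_comp e.toEquiv (fun T => (-1 : ℤ) ^ Nat.card T)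
  have h3 : (∑ T : Set A, (-1 : ℤ) ^ Nat.card T)
      = ∑ s : Finset A, (-1 : ℤ) ^ s.card := by
    rw [← Equiv.sum_comp (Fintype.finsetEquivSet (α := A))
      (fun T => (-1 : ℤ) ^ Nat.card T)]
    refine Finset.sum_congr rfl (fun s _ => ?_)
    congr 1
    simp [Fintype.coe_finsetEquivSet, Nat.card_coe_set_eq, Set.ncard_coe_finset]
  have h4 : (∑ s : Finset A, (-1 : ℤ) ^ s.card)
      = if (Finset.univ : Finset A) = ∅ then 1 else 0 := by
    have := Finset.sum_powerset_neg_one_pow_card (α := A) (x := Finset.univ)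
    rw [Finset.powerset_univ] at this
    exact this
  rw [h1, h2, h3, h4]
  by_cases hx : x = ⊥
  · have : IsEmpty A := ⟨fun a => a.2.1.1 (le_bot_iff.mp (hx ▸ a.2.2))⟩
    simp [hx, Finset.univ_eq_empty]
  · have : Nonempty A := by
      rcases IsAtomic.eq_bot_or_exists_atom_le x with h' | ⟨a, ha, hax⟩
      · exact absurd h' hx
      · exact ⟨⟨a, ha, hax⟩⟩
    have hne : (Finset.univ : Finset A) ≠ ∅ := Finset.univ_nonempty.ne_empty
    simp [hx, hne]

end AuxST19
open Classical in
/-- Theorem 11.2: for a loopless matroid scheme, the characteristic polynomial of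
the poset of flats satisfies `χ_F(t) = (−1)^{ρ(M)} T_M(1 − t, 0)`. -/
theorem statement19 {S : Type*} [PartialOrder S] [OrderBot S] [Fintype S]
    (ρ : S → ℕ) (h : IsMatroidScheme ρ) (cl : S → S) (hcl : IsClosureFun ρ cl)
    (hnoloop : ∀ a : S, IsAtom a → ρ a ≠ 0)
    (μ : {x : S // cl x = x} → ℤ) (b : {x : S // cl x = x})
    (hb : ∀ z : {x : S // cl x = x}, b ≤ z)
    (hμb : μ b = 1)
    (hμ : ∀ w : {x : S // cl x = x}, b < w →
      ∑ u : {x : S // cl x = x}, (if u ≤ w then μ u else 0) = 0) :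
    ∀ t : ℤ,
      ∑ w : {x : S // cl x = x}, μ w * t ^ (schemeRank ρ - ρ w.val) =
        (-1 : ℤ) ^ (schemeRank ρ) * tutte ρ (1 - t) 0 := by
    classical
  intro t
  have hρr : ∀ w : S, ρ w ≤ schemeRank ρ := fun w =>
    le_csSup (Set.Finite.bddAbove (Set.finite_range ρ)) ⟨w, rfl⟩
  have hclcl := st19_cl_idem hcl
  have hclbot := st19_cl_bot h hcl hnoloop
  have hbval : b.val = (⊥ : S) := le_bot_iff.mp (hb ⟨⊥, hclbot⟩)
  have hflatle : ∀ (w : S) (f : {x : S // cl x = x}), cl w ≤ f.val ↔ w ≤ f.val :=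
    fun w f => ⟨fun h' => le_trans (hcl w).1 h', fun h' => st19_cl_le_flat h hcl f.2 h'⟩
  have hbool : ∀ x : S,
      (∑ w : S, if w ≤ x then ((-1 : ℤ) ^ natRank w) else 0) = if x = ⊥ then 1 else 0 :=
    fun x => st19_bool_sum h.simplicial x
  have hfb : ∀ f : {x : S // cl x = x}, f = b ↔ f.val = ⊥ := by
    intro f
    constructor
    · intro e; rw [e, hbval]
    · intro e
      refine le_antisymm (Subtype.coe_le_coe.mp ?_) (hb f)
      rw [e, hbval]
  -- sum of G over a lower set of flats
  have hGsum : ∀ f : {x : S // cl x = x},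
      (∑ u : {x : S // cl x = x}, if u ≤ f then
        (∑ w : S, if cl w = u.val then (-1 : ℤ) ^ natRank w else 0) else 0)
        = if f = b then 1 else 0 := by
    intro f
    have step1 : ∀ u : {x : S // cl x = x},
        (if u ≤ f then (∑ w : S, if cl w = u.val then (-1 : ℤ) ^ natRank w else 0) else 0)
          = ∑ w : S, if u ≤ f then (if cl w = u.val then (-1 : ℤ) ^ natRank w else 0) else 0 := by
      intro u; split <;> simp
    rw [Finset.sum_congr rfl fun u _ => step1 u, Finset.sum_comm]
    have step2 : ∀ w : S,
        (∑ u : {x : S // cl x = x},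
            if u ≤ f then (if cl w = u.val then (-1 : ℤ) ^ natRank w else 0) else 0)
          = (if w ≤ f.val then (-1 : ℤ) ^ natRank w else 0) := by
      intro w
      have p : ∀ u : {x : S // cl x = x},
          (if u ≤ f then (if cl w = u.val then (-1 : ℤ) ^ natRank w else 0) else 0)
            = (if u = (⟨cl w, hclcl w⟩ : {x : S // cl x = x}) then
                (if w ≤ f.val then (-1 : ℤ) ^ natRank w else 0) else 0) := by
        intro u
        by_cases hu : u = (⟨cl w, hclcl w⟩ : {x : S // cl x = x})
        · subst hu
          rw [if_pos rfl]
          by_cases hw : w ≤ f.val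
          · rw [if_pos hw, if_pos (Subtype.coe_le_coe.mp ((hflatle w f).mpr hw))]
            simp
          · rw [if_neg hw,
              if_neg (fun hh => hw ((hflatle w f).mp (Subtype.coe_le_coe.mpr hh)))]
            simp
        · rw [if_neg hu]
          by_cases hle : u ≤ f
          · rw [if_pos hle, if_neg (fun hh => hu (Subtype.ext hh.symm))]
          · rw [if_neg hle]
      rw [Finset.sum_congr rfl fun u _ => p u, Finset.sum_ite_eq' Finset.univ]
      simp
    rw [Finset.sum_congr rfl fun w _ => step2 w, hbool f.val]
    by_cases hfb' : f = b
    · rw [if_pos ((hfb f).mp hfb'), if_pos hfb']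
    · rw [if_neg (fun e => hfb' ((hfb f).mpr e)), if_neg hfb']
  -- sum of μ over a lower set of flats
  have hμsum : ∀ f : {x : S // cl x = x},
      (∑ u : {x : S // cl x = x}, if u ≤ f then μ u else 0) = if f = b then 1 else 0 := by
    intro f
    by_cases hfb' : f = b
    · subst hfb'
      have p : ∀ u : {x : S // cl x = x},
          (if u ≤ f then μ u else 0) = if u = f then μ u else 0 := by
        intro u
        by_cases hu : u = f
        · subst hu; simp
        · rw [if_neg hu, if_neg (fun hle => hu (le_antisymm hle (hb u)))]
      rw [Finset.sum_congr rfl fun u _ => p u, Finset.sum_ite_eq' Finset.univ]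
      simp [hμb]
    · rw [if_neg hfb']
      exact hμ f (lt_of_le_of_ne (hb f) (fun e => hfb' e.symm))
  -- Möbius function equals the alternating fiber sums
  have hμG : ∀ f : {x : S // cl x = x},
      μ f = ∑ w : S, if cl w = f.val then (-1 : ℤ) ^ natRank w else 0 := by
    intro f
    refine WellFoundedLT.induction (motive := fun g => μ g = ∑ w : S, if cl w = g.val then (-1 : ℤ) ^ natRank w else 0) f ?_
    intro f IH
    have h3 : (∑ u : {x : S // cl x = x},
        if u ≤ f then (μ u - ∑ w : S, if cl w = u.val then (-1 : ℤ) ^ natRank w else 0) else 0)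
          = 0 := by
      have p : ∀ u : {x : S // cl x = x},
          (if u ≤ f then (μ u - ∑ w : S, if cl w = u.val then (-1 : ℤ) ^ natRank w else 0) else 0)
            = (if u ≤ f then μ u else 0)
              - (if u ≤ f then (∑ w : S, if cl w = u.val then (-1 : ℤ) ^ natRank w else 0) else 0) := by
        intro u; split <;> simp
      rw [Finset.sum_congr rfl fun u _ => p u, Finset.sum_sub_distrib, hμsum f, hGsum f, sub_self]
    have p4 : ∀ u : {x : S // cl x = x},
        (if u ≤ f then (μ u - ∑ w : S, if cl w = u.val then (-1 : ℤ) ^ natRank w else 0) else 0)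
          = (if u = f then (μ u - ∑ w : S, if cl w = u.val then (-1 : ℤ) ^ natRank w else 0) else 0) := by
      intro u
      by_cases hu : u = f
      · subst hu; simp
      · by_cases hle : u ≤ f
        · rw [if_pos hle, if_neg hu, IH u (lt_of_le_of_ne hle hu), sub_self]
        · rw [if_neg hle, if_neg hu]
    rw [Finset.sum_congr rfl fun u _ => p4 u, Finset.sum_ite_eq' Finset.univ] at h3
    simp only [Finset.mem_univ, if_pos] at h3
    linarith
  calc
    (∑ w : {x : S // cl x = x}, μ w * t ^ (schemeRank ρ - ρ w.val))
        = ∑ w : {x : S // cl x = x},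
            (∑ v : S, if cl v = w.val then (-1 : ℤ) ^ natRank v else 0)
              * t ^ (schemeRank ρ - ρ w.val) :=
      Finset.sum_congr rfl fun w _ => by rw [hμG w]
    _ = ∑ v : S, (-1 : ℤ) ^ natRank v * t ^ (schemeRank ρ - ρ v) := by
      have p : ∀ w : {x : S // cl x = x},
          (∑ v : S, if cl v = w.val then (-1 : ℤ) ^ natRank v else 0)
              * t ^ (schemeRank ρ - ρ w.val)
            = ∑ v : S, (if w = (⟨cl v, hclcl v⟩ : {x : S // cl x = x}) then
                (-1 : ℤ) ^ natRank v * t ^ (schemeRank ρ - ρ (cl v)) else 0) := by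
        intro w
        rw [Finset.sum_mul]
        refine Finset.sum_congr rfl fun v _ => ?_
        by_cases hv : cl v = w.val
        · rw [if_pos hv, if_pos (Subtype.ext hv.symm), ← hv]
        · rw [if_neg hv, if_neg (fun e => hv (congrArg Subtype.val e).symm), zero_mul]
      rw [Finset.sum_congr rfl fun w _ => p w, Finset.sum_comm]
      refine Finset.sum_congr rfl fun v _ => ?_
      rw [Finset.sum_ite_eq' Finset.univ (⟨cl v, hclcl v⟩ : {x : S // cl x = x})]
      simp [(hcl v).2.1]
    _ = (-1 : ℤ) ^ (schemeRank ρ) * tutte ρ (1 - t) 0 := by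
      simp only [tutte]
      rw [Finset.mul_sum]
      refine Finset.sum_congr rfl fun w _ => ?_
      obtain ⟨n, hn⟩ := Nat.exists_eq_add_of_le (hρr w)
      obtain ⟨m, hm⟩ := Nat.exists_eq_add_of_le (h.M1 w)
      rw [hn, hm, Nat.add_sub_cancel_left, Nat.add_sub_cancel_left]
      have e1 : ((1 - t) - 1 : ℤ) = -t := by ring
      have e2 : ((0 : ℤ) - 1) = -1 := by ring
      rw [e1, e2, pow_add, pow_add, neg_pow]
      have key : ((-1 : ℤ) ^ n) * ((-1 : ℤ) ^ n) = 1 := by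
        rw [← pow_add]; exact Even.neg_one_pow ⟨n, rfl⟩
      linear_combination (-((-1 : ℤ) ^ (ρ w) * (-1 : ℤ) ^ m * t ^ n)) * key
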